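/- First Jacobian rule (eq. SandM, first rule): fix ξ ∈ ℂ and an N×N complex matrix A. For every N×N complex matrix M such that ξ·I − M is invertible, the map F(M) = (ξ·I − M)⁻¹ · A is differentiable at M and its divergence satisfies div F(M) = tr((ξ·I − M)⁻¹ A) · tr((ξ·I − M)⁻¹). -/

import Mathlib

open Matrix

attribute [local instance] Matrix.normedAddCommGroup Matrix.normedSpace

/-- Sup-norm submultiplicativity up to a factor of the dimension. -/
lemma matrix_norm_mul_le {N : ℕ} (P Q : Matrix (Fin N) (Fin N) ℂ) :
    ‖P * Q‖ ≤ (N : ℝ) * ‖P‖ * ‖Q‖ := by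
  have hnn : (0:ℝ) ≤ (N : ℝ) * ‖P‖ * ‖Q‖ := by positivity
  rw [Matrix.norm_le_iff hnn]
  intro i j
  rw [Matrix.mul_apply]
  calc ‖∑ k, P i k * Q k j‖ ≤ ∑ k, ‖P i k * Q k j‖ := norm_sum_le _ _
    _ ≤ ∑ _k : Fin N, ‖P‖ * ‖Q‖ := by
        apply Finset.sum_le_sum
        intro k _
        rw [norm_mul]
        exact mul_le_mul (Matrix.norm_entry_le_entrywise_sup_norm P)
          (Matrix.norm_entry_le_entrywise_sup_norm Q) (norm_nonneg _) (norm_nonneg _)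
    _ = (N : ℝ) * ‖P‖ * ‖Q‖ := by
        simp [Finset.sum_const, mul_assoc]

lemma mul_stdBasis_mul_apply {N : ℕ} (R B : Matrix (Fin N) (Fin N) ℂ) (i j a b : Fin N) :
    (R * Matrix.single i j (1 : ℂ) * B) a b = R a i * B j b := by
  rw [Matrix.mul_apply]
  have h : ∀ l, (R * Matrix.single i j (1 : ℂ)) a l
      = if l = j then R a i else 0 := by
    intro l
    rw [Matrix.mul_apply]
    simp [Matrix.single, ite_and, Finset.sum_ite_eq', eq_comm]
  simp_rw [h]
  simp

/-- The key differentiability statement, with explicit derivative. -/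
lemma hasFDerivAt_resolvent_mul {N : ℕ} (ξ : ℂ) (A M : Matrix (Fin N) (Fin N) ℂ)
    (hM : IsUnit (ξ • (1 : Matrix (Fin N) (Fin N) ℂ) - M)) :
    HasFDerivAt (fun X : Matrix (Fin N) (Fin N) ℂ =>
        (ξ • (1 : Matrix (Fin N) (Fin N) ℂ) - X)⁻¹ * A)
      (LinearMap.toContinuousLinearMap
        ((LinearMap.mulRight ℂ ((ξ • (1 : Matrix (Fin N) (Fin N) ℂ) - M)⁻¹ * A)).comp
          (LinearMap.mulLeft ℂ (ξ • (1 : Matrix (Fin N) (Fin N) ℂ) - M)⁻¹))) M := by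
  set Y : Matrix (Fin N) (Fin N) ℂ → Matrix (Fin N) (Fin N) ℂ :=
    fun X => ξ • (1 : Matrix (Fin N) (Fin N) ℂ) - X with hY
  set R : Matrix (Fin N) (Fin N) ℂ := (Y M)⁻¹ with hR
  set B : Matrix (Fin N) (Fin N) ℂ := R * A with hB
  -- continuity of X ↦ (Y X)⁻¹ at M
  have hdet : (Y M).det ≠ 0 := by
    intro h
    exact (Matrix.isUnit_iff_isUnit_det _ |>.mp hM).ne_zero h
  have hcontY : Continuous Y := by
    exact continuous_const.sub continuous_id
  have hinv_cont : ContinuousAt (fun X => (Y X)⁻¹) M := by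
    have h1 : ContinuousAt Inv.inv (Y M) := by
      apply continuousAt_matrix_inv
      have : ContinuousAt Ring.inverse ((Y M).det) := by
        rw [show (Ring.inverse : ℂ → ℂ) = Inv.inv from funext fun z => Ring.inverse_eq_inv z]
        exact continuousAt_inv₀ hdet
      exact this
    exact h1.comp hcontY.continuousAt
  -- eventually invertible
  have hdet_cont : ContinuousAt (fun X => (Y X).det) M :=
    (continuous_id.matrix_det.comp hcontY).continuousAt
  have hev : ∀ᶠ X in nhds M, (Y X).det ≠ 0 := hdet_cont.eventually_ne hdet
  -- tendsto of g
  have hg0 : Filter.Tendsto (fun X => (Y X)⁻¹ - R) (nhds M) (nhds 0) := by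
    have := hinv_cont.tendsto
    rw [show (0 : Matrix (Fin N) (Fin N) ℂ) = R - R by simp]
    exact this.sub tendsto_const_nhds
  refine hasFDerivAt_iff_isLittleO_nhds_zero.mpr ?_
  -- target: (fun h => f (M + h) - f M - L h) =o[𝓝 0] fun h => h
  have key : (fun H : Matrix (Fin N) (Fin N) ℂ =>
      ((Y (M + H))⁻¹ - R) * H * B) =o[nhds 0] (fun H => H) := by
    rw [Asymptotics.isLittleO_iff]
    intro c hc
    set C : ℝ := (N : ℝ) * ((N : ℝ) * ‖B‖) + 1 with hC
    have hCpos : 0 < C := by positivity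
    have hgH : Filter.Tendsto (fun H : Matrix (Fin N) (Fin N) ℂ => (Y (M + H))⁻¹ - R)
        (nhds 0) (nhds 0) := by
      apply hg0.comp
      have : Filter.Tendsto (fun H : Matrix (Fin N) (Fin N) ℂ => M + H) (nhds 0) (nhds (M + 0)) :=
        tendsto_const_nhds.add Filter.tendsto_id
      simpa using this
    have hsmall : ∀ᶠ H in nhds (0 : Matrix (Fin N) (Fin N) ℂ),
        ‖(Y (M + H))⁻¹ - R‖ < c / C := by
      have := hgH.eventually (Metric.ball_mem_nhds (0 : Matrix (Fin N) (Fin N) ℂ)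
        (div_pos hc hCpos))
      filter_upwards [this] with H hH
      simpa [mem_ball_zero_iff] using hH
    filter_upwards [hsmall] with H hH
    calc ‖((Y (M + H))⁻¹ - R) * H * B‖
        ≤ (N : ℝ) * ‖((Y (M + H))⁻¹ - R) * H‖ * ‖B‖ := matrix_norm_mul_le _ _
      _ ≤ (N : ℝ) * ((N : ℝ) * ‖(Y (M + H))⁻¹ - R‖ * ‖H‖) * ‖B‖ := by
          gcongr
          exact matrix_norm_mul_le _ _
      _ = ((N : ℝ) * ((N : ℝ) * ‖B‖)) * ‖(Y (M + H))⁻¹ - R‖ * ‖H‖ := by ring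
      _ ≤ C * ‖(Y (M + H))⁻¹ - R‖ * ‖H‖ := by
          have hle : (N : ℝ) * ((N : ℝ) * ‖B‖) ≤ C := by rw [hC]; linarith
          gcongr
      _ ≤ C * (c / C) * ‖H‖ := by gcongr
      _ = c * ‖H‖ := by field_simp
  apply key.congr' _ (Filter.EventuallyEq.refl _ _)
  -- eventual equality
  have hev0 : ∀ᶠ H in nhds (0 : Matrix (Fin N) (Fin N) ℂ), (Y (M + H)).det ≠ 0 := by
    have hmap : Filter.Tendsto (fun H : Matrix (Fin N) (Fin N) ℂ => M + H) (nhds 0) (nhds M) := by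
      have : Filter.Tendsto (fun H : Matrix (Fin N) (Fin N) ℂ => M + H) (nhds 0) (nhds (M + 0)) :=
        tendsto_const_nhds.add Filter.tendsto_id
      simpa using this
    exact hmap.eventually hev
  filter_upwards [hev0] with H hH
  have hYu : IsUnit (Y (M + H)) := (Matrix.isUnit_iff_isUnit_det _).mpr (isUnit_iff_ne_zero.mpr hH)
  have hinv1 : (Y (M + H)) * (Y (M + H))⁻¹ = 1 := Matrix.mul_nonsing_inv _ (isUnit_iff_ne_zero.mpr hH)
  have hinv1' : (Y (M + H))⁻¹ * (Y (M + H)) = 1 := Matrix.nonsing_inv_mul _ (isUnit_iff_ne_zero.mpr hH)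
  have hinv2 : (Y M) * R = 1 := Matrix.mul_nonsing_inv _ (isUnit_iff_ne_zero.mpr hdet)
  have hinv2' : R * (Y M) = 1 := Matrix.nonsing_inv_mul _ (isUnit_iff_ne_zero.mpr hdet)
  have hdiff : Y M - Y (M + H) = H := by
    simp [hY]
  have hident : (Y (M + H))⁻¹ - R = (Y (M + H))⁻¹ * H * R := by
    have : (Y (M + H))⁻¹ * (Y M - Y (M + H)) * R = (Y (M + H))⁻¹ - R := by
      rw [Matrix.mul_sub, Matrix.sub_mul, Matrix.mul_assoc, hinv2, Matrix.mul_one, hinv1', ]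
      simp [Matrix.one_mul]
    rw [← this, hdiff]
  show ((Y (M + H))⁻¹ - R) * H * B
      = (Y (M + H))⁻¹ * A - R * A -
        (LinearMap.toContinuousLinearMap
          ((LinearMap.mulRight ℂ B).comp (LinearMap.mulLeft ℂ R))) H
  have hL : (LinearMap.toContinuousLinearMap
      ((LinearMap.mulRight ℂ B).comp (LinearMap.mulLeft ℂ R))) H = R * H * B := rfl
  have h2 : (Y (M + H))⁻¹ * A - R * A = (Y (M + H))⁻¹ * H * (R * A) := by
    rw [← Matrix.sub_mul, hident, Matrix.mul_assoc]
  rw [hL, hB, Matrix.sub_mul, Matrix.sub_mul, h2]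

/-- The divergence of a map `F` on `N×N` complex matrices at `M`:
`div F (M) = ∑_{i,j} (D F_{ij})(M)[E_{ij}]`, where `E_{ij}` is the elementary matrix. -/
noncomputable def matrixDivergence {N : ℕ}
    (F : Matrix (Fin N) (Fin N) ℂ → Matrix (Fin N) (Fin N) ℂ)
    (M : Matrix (Fin N) (Fin N) ℂ) : ℂ :=
  ∑ i : Fin N, ∑ j : Fin N,
    fderiv ℂ (fun X => F X i j) M (Matrix.single i j (1 : ℂ))

/-- Evaluation of the `(i,j)` entry, as a continuous linear map. -/
noncomputable def entryCLM {N : ℕ} (i j : Fin N) : Matrix (Fin N) (Fin N) ℂ →L[ℂ] ℂ :=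
  LinearMap.toContinuousLinearMap
    { toFun := fun X => X i j
      map_add' := fun _ _ => rfl
      map_smul' := fun _ _ => rfl }

/-- First Jacobian rule (eq. SandM, first rule): for `F(M) = (ξ·I − M)⁻¹ · A`, whenever
`ξ·I − M` is invertible, `F` is differentiable at `M` and
`div F (M) = tr((ξ·I − M)⁻¹ A) · tr((ξ·I − M)⁻¹)`. -/
theorem jacobian_rule_resolvent_times_const (N : ℕ) (ξ : ℂ)
    (A M : Matrix (Fin N) (Fin N) ℂ)
    (hM : IsUnit (ξ • (1 : Matrix (Fin N) (Fin N) ℂ) - M)) :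
    DifferentiableAt ℂ (fun X : Matrix (Fin N) (Fin N) ℂ =>
        (ξ • (1 : Matrix (Fin N) (Fin N) ℂ) - X)⁻¹ * A) M ∧
      matrixDivergence (fun X => (ξ • (1 : Matrix (Fin N) (Fin N) ℂ) - X)⁻¹ * A) M
        = ((ξ • (1 : Matrix (Fin N) (Fin N) ℂ) - M)⁻¹ * A).trace *
            ((ξ • (1 : Matrix (Fin N) (Fin N) ℂ) - M)⁻¹).trace := by
  have hF := hasFDerivAt_resolvent_mul ξ A M hM
  set R : Matrix (Fin N) (Fin N) ℂ := (ξ • (1 : Matrix (Fin N) (Fin N) ℂ) - M)⁻¹ with hR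
  refine ⟨hF.differentiableAt, ?_⟩
  have hentry : ∀ i j : Fin N,
      fderiv ℂ (fun X => ((ξ • (1 : Matrix (Fin N) (Fin N) ℂ) - X)⁻¹ * A) i j) M
        (Matrix.single i j (1 : ℂ)) = R i i * (R * A) j j := by
    intro i j
    have hcomp : HasFDerivAt
        (fun X => ((ξ • (1 : Matrix (Fin N) (Fin N) ℂ) - X)⁻¹ * A) i j)
        ((entryCLM i j).comp (LinearMap.toContinuousLinearMap
          ((LinearMap.mulRight ℂ (R * A)).comp (LinearMap.mulLeft ℂ R)))) M :=
      ((entryCLM i j).hasFDerivAt).comp M hF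
    rw [hcomp.fderiv]
    show (R * Matrix.single i j (1 : ℂ) * (R * A)) i j = R i i * (R * A) j j
    exact mul_stdBasis_mul_apply R (R * A) i j i j
  unfold matrixDivergence
  simp_rw [hentry]
  rw [← Finset.sum_mul_sum]
  rw [Matrix.trace, Matrix.trace]
  simp [Matrix.diag, mul_comm]
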